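/- Define ρ̃(a,b,c,d,e,f) to be the 2×2 real matrix with entries ρ̃₁₁ = (a−d+1)d + b(f−c), ρ̃₁₂ = cd − be + f, ρ̃₂₁ = c(d−1) − be, ρ̃₂₂ = −c² + fc + (a−d−1)e. Define U₁(r,s) = (1+rs², −s(1+rs²), rs, −rs², r, −rs), U₂(u,v) = (u,v,0,0,0,0), and U₃(u,v) = (u,v,0,1+u,0,0). Then { x ∈ ℝ⁶ : ρ̃(x) = 0 } = Range(U₁) ∪ Range(U₂) ∪ Range(U₃). -/

import Mathlib

open Matrix

/-- The space of Type B models: `(a,b,c,d,e,f)` records the Christoffel symbols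
`Γᵢⱼᵏ = Aᵢⱼᵏ / x¹`. -/
abbrev R6 : Type := ℝ × ℝ × ℝ × ℝ × ℝ × ℝ

/-- `(x¹)²` times the Ricci tensor of the Type B model `𝒩(a,b,c,d,e,f)`. -/
def ρB : R6 → Matrix (Fin 2) (Fin 2) ℝ
  | (a, b, c, d, e, f) =>
    !![(a-d+1)*d + b*(f-c), c*d - b*e + f;
       c*(d-1) - b*e, -c^2 + f*c + (a-d-1)*e]

def U1 : ℝ × ℝ → R6 := fun p =>
  (1 + p.1*p.2^2, -p.2*(1 + p.1*p.2^2), p.1*p.2, -p.1*p.2^2, p.1, -p.1*p.2)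

def U2 : ℝ × ℝ → R6 := fun p => (p.1, p.2, 0, 0, 0, 0)

def U3 : ℝ × ℝ → R6 := fun p => (p.1, p.2, 0, 1 + p.1, 0, 0)

lemma rhoB_eq_zero_iff (a b c d e f : ℝ) :
    ρB (a,b,c,d,e,f) = 0 ↔
      (a-d+1)*d + b*(f-c) = 0 ∧ c*d - b*e + f = 0 ∧
      c*(d-1) - b*e = 0 ∧ -c^2 + f*c + (a-d-1)*e = 0 := by
  rw [show ρB (a,b,c,d,e,f) = !![(a-d+1)*d + b*(f-c), c*d - b*e + f;
       c*(d-1) - b*e, -c^2 + f*c + (a-d-1)*e] from rfl]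
  rw [← Matrix.ext_iff]
  simp [Fin.forall_fin_two, and_assoc]

theorem stmt_13 :
    {x : R6 | ρB x = 0} = Set.range U1 ∪ Set.range U2 ∪ Set.range U3 := by
  ext ⟨a,b,c,d,e,f⟩
  simp only [Set.mem_setOf_eq, Set.mem_union, Set.mem_range, rhoB_eq_zero_iff]
  constructor
  · rintro ⟨h11, h12, h21, h22⟩
    have hf : f = -c := by linarith
    by_cases he : e = 0
    · subst he
      have hc : c = 0 := by nlinarith [sq_nonneg c]
      subst hc
      have hf0 : f = 0 := by linarith
      subst hf0
      by_cases hd : d = 0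
      · subst hd
        exact Or.inl (Or.inr ⟨(a, b), rfl⟩)
      · have hda : d = 1 + a := by
          have h : (a - d + 1) * d = 0 := by linarith
          rcases mul_eq_zero.mp h with h | h
          · linarith
          · exact absurd h hd
        refine Or.inr ⟨(a, b), ?_⟩
        simp only [U3, Prod.mk.injEq]
        simp only [eq_self_iff_true, true_and, and_true]
        exact hda.symm
    · subst hf
      have h1 : (a - d + 1) * d - 2*b*c = 0 := by linarith
      have hd : e * d = -c^2 := by
        linear_combination (e*h1 - 2*c*h21 - d*h22)/2
      have ha : (a - d - 1) * e = 2 * c^2 := by linear_combination h22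
      have hb : b * e = c * (d - 1) := by linarith
      refine Or.inl (Or.inl ⟨(e, c/e), ?_⟩)
      simp only [U1, Prod.mk.injEq]
      refine ⟨?_, ?_, ?_, ?_, ?_⟩
      · field_simp
        linear_combination -ha - hd
      · field_simp
        linear_combination -e*hb - c*hd
      · field_simp
      · field_simp
        linear_combination -hd
      · field_simp
        exact ⟨trivial, trivial⟩
  · rintro ((⟨⟨r,s⟩,h⟩ | ⟨⟨u,v⟩,h⟩) | ⟨⟨u,v⟩,h⟩) <;>
      · simp only [U1, U2, U3, Prod.mk.injEq] at h
        obtain ⟨h1,h2,h3,h4,h5,h6⟩ := h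
        subst h1; subst h2; subst h3; subst h4; subst h5; subst h6
        refine ⟨by ring, by ring, by ring, by ring⟩
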